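/- If f : E → ℝ is L-Lipschitz on a neighborhood of x in a normed space E, then f is D^-_M-differentiable and D^+_M-differentiable at x, and the maps u ↦ D^-_M f(x)(u) and u ↦ D^+_M f(x)(u) are L-Lipschitz on E. -/

import Mathlib

open Filter Topology

variable {E : Type*} [NormedAddCommGroup E] [NormedSpace ℝ E]

/-- Difference quotient of `f` at `x` in direction `u`. -/
noncomputable def diniQuot (f : E → ℝ) (x u : E) : ℝ → ℝ :=
  fun t => (f (x + t • u) - f x) / t

/-- Lower Dini derivative `D⁻ f(x)(u)`. -/
noncomputable def lowerDini (f : E → ℝ) (x u : E) : ℝ :=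
  liminf (diniQuot f x u) (𝓝[>] 0)

/-- Upper Dini derivative `D⁺ f(x)(u)`. -/
noncomputable def upperDini (f : E → ℝ) (x u : E) : ℝ :=
  limsup (diniQuot f x u) (𝓝[>] 0)

/-- Modified lower Dini derivative `D⁻_M f(x)(u)`. -/
noncomputable def lowerDiniM (f : E → ℝ) (x u : E) : ℝ :=
  ⨅ w : E, (lowerDini f x (u + w) - lowerDini f x w)

/-- Modified upper Dini derivative `D⁺_M f(x)(u)`. -/
noncomputable def upperDiniM (f : E → ℝ) (x u : E) : ℝ :=
  ⨆ w : E, (upperDini f x (u + w) - upperDini f x w)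

/-- The difference quotients of `f` at `x` in direction `u` are bounded near `0⁺`,
so that the lower/upper Dini derivatives are genuine (finite) values. -/
def DiniFinite (f : E → ℝ) (x u : E) : Prop :=
  IsBoundedUnder (· ≤ ·) (𝓝[>] (0:ℝ)) (diniQuot f x u) ∧
  IsBoundedUnder (· ≥ ·) (𝓝[>] (0:ℝ)) (diniQuot f x u)

/-- Finiteness of the modified lower Dini derivative. -/
def LowerDiniMFinite (f : E → ℝ) (x u : E) : Prop :=
  BddBelow (Set.range fun w : E => lowerDini f x (u + w) - lowerDini f x w)

/-- Finiteness of the modified upper Dini derivative. -/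
def UpperDiniMFinite (f : E → ℝ) (x u : E) : Prop :=
  BddAbove (Set.range fun w : E => upperDini f x (u + w) - upperDini f x w)

/-- a function Lipschitz (with constant `L`) on a neighborhood of `x`
is `D⁻_M`- and `D⁺_M`-differentiable at `x`, and the modified Dini derivatives
are `L`-Lipschitz on `E`. -/
theorem lipschitz_diniM (f : E → ℝ) (x : E) (L : NNReal) (s : Set E)
    (hs : s ∈ 𝓝 x) (hf : LipschitzOnWith L f s) :
    (∀ u : E, DiniFinite f x u) ∧
    (∀ u : E, LowerDiniMFinite f x u) ∧
    (∀ u : E, UpperDiniMFinite f x u) ∧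
    LipschitzWith L (lowerDiniM f x) ∧
    LipschitzWith L (upperDiniM f x) := by

  -- eventually x + t • u ∈ s
  have hmem : ∀ u : E, ∀ᶠ t in 𝓝[>] (0:ℝ), x + t • u ∈ s := by
    intro u
    obtain ⟨ε, hε, hball⟩ := Metric.mem_nhds_iff.1 hs
    have hpos : (0:ℝ) < ε / (‖u‖ + 1) := by positivity
    filter_upwards [Ioo_mem_nhdsGT_of_mem (Set.mem_Ico.2 ⟨le_refl (0:ℝ), hpos⟩),
      self_mem_nhdsWithin] with t ht ht0
    apply hball
    have ht0' : (0:ℝ) < t := ht0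
    have ht1 : t < ε / (‖u‖ + 1) := ht.2
    have h2 : dist (x + t • u) x = t * ‖u‖ := by
      rw [dist_eq_norm]
      simp [norm_smul, abs_of_pos ht0']
    have h3 : t * ‖u‖ < ε := by
      have : t * (‖u‖ + 1) < ε := by
        rw [← lt_div_iff₀ (by positivity)]
        exact ht1
      nlinarith [norm_nonneg u]
    simp only [Metric.mem_ball]
    rw [h2]; exact h3
  -- difference quotients are close for nearby directions
  have hquot : ∀ u v : E, ∀ᶠ t in 𝓝[>] (0:ℝ),
      |diniQuot f x u t - diniQuot f x v t| ≤ L * ‖u - v‖ := by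
    intro u v
    filter_upwards [hmem u, hmem v, self_mem_nhdsWithin] with t hu hv ht0
    have ht0 : (0:ℝ) < t := ht0
    have hdist := hf.dist_le_mul _ hu _ hv
    have hd : dist (x + t • u) (x + t • v) = t * ‖u - v‖ := by
      rw [dist_eq_norm]
      have he : x + t • u - (x + t • v) = t • (u - v) := by module
      rw [he, norm_smul]
      simp [abs_of_pos ht0]
    rw [hd, Real.dist_eq] at hdist
    have heq : diniQuot f x u t - diniQuot f x v t
        = (f (x + t • u) - f (x + t • v)) / t := by
      simp only [diniQuot]
      field_simp
      ring
    rw [heq, abs_div, abs_of_pos ht0, div_le_iff₀ ht0]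
    calc |f (x + t • u) - f (x + t • v)| ≤ L * (t * ‖u - v‖) := hdist
      _ = ↑L * ‖u - v‖ * t := by ring
  have hquot0 : ∀ u : E, ∀ᶠ t in 𝓝[>] (0:ℝ), |diniQuot f x u t| ≤ L * ‖u‖ := by
    intro u
    filter_upwards [hquot u 0] with t ht
    simpa [diniQuot] using ht
  have hfin : ∀ u : E, DiniFinite f x u := by
    intro u
    constructor
    · exact ⟨L * ‖u‖, Filter.eventually_map.2 <| by
        filter_upwards [hquot0 u] with t ht using (abs_le.1 ht).2⟩
    · exact ⟨-(L * ‖u‖), Filter.eventually_map.2 <| by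
        filter_upwards [hquot0 u] with t ht using (abs_le.1 ht).1⟩
  -- Lipschitz estimates for lowerDini / upperDini
  have hlow : ∀ u v : E, lowerDini f x u ≤ lowerDini f x v + L * ‖u - v‖ := by
    intro u v
    have h1 : ∀ᶠ t in 𝓝[>] (0:ℝ), diniQuot f x u t ≤ diniQuot f x v t + L * ‖u - v‖ := by
      filter_upwards [hquot u v] with t ht
      linarith [(abs_le.1 ht).2]
    have h2 : liminf (fun t => diniQuot f x v t + (L * ‖u - v‖ : ℝ)) (𝓝[>] (0:ℝ))
        = lowerDini f x v + L * ‖u - v‖ :=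
      liminf_add_const (𝓝[>] (0:ℝ)) (diniQuot f x v) _
        ((hfin v).1.isCoboundedUnder_ge) (hfin v).2
    have hcob : IsCoboundedUnder (· ≥ ·) (𝓝[>] (0:ℝ))
        (fun t => diniQuot f x v t + (L * ‖u - v‖ : ℝ)) := by
      apply isCoboundedUnder_ge_of_eventually_le (𝓝[>] (0:ℝ))
        (x := (L * ‖v‖ : ℝ) + L * ‖u - v‖)
      filter_upwards [hquot0 v] with t ht
      linarith [(abs_le.1 ht).2]
    calc lowerDini f x u
        ≤ liminf (fun t => diniQuot f x v t + (L * ‖u - v‖ : ℝ)) (𝓝[>] (0:ℝ)) :=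
          liminf_le_liminf h1 (hfin u).2 hcob
      _ = lowerDini f x v + L * ‖u - v‖ := h2
  have hupp : ∀ u v : E, upperDini f x u ≤ upperDini f x v + L * ‖u - v‖ := by
    intro u v
    have h1 : ∀ᶠ t in 𝓝[>] (0:ℝ), diniQuot f x u t ≤ diniQuot f x v t + L * ‖u - v‖ := by
      filter_upwards [hquot u v] with t ht
      linarith [(abs_le.1 ht).2]
    have h2 : limsup (fun t => diniQuot f x v t + (L * ‖u - v‖ : ℝ)) (𝓝[>] (0:ℝ))
        = upperDini f x v + L * ‖u - v‖ :=
      limsup_add_const (𝓝[>] (0:ℝ)) (diniQuot f x v) _ (hfin v).1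
        ((hfin v).2.isCoboundedUnder_le)
    have hbd : IsBoundedUnder (· ≤ ·) (𝓝[>] (0:ℝ))
        (fun t => diniQuot f x v t + (L * ‖u - v‖ : ℝ)) := by
      refine ⟨(L * ‖v‖ : ℝ) + L * ‖u - v‖, Filter.eventually_map.2 ?_⟩
      filter_upwards [hquot0 v] with t ht
      linarith [(abs_le.1 ht).2]
    calc upperDini f x u
        ≤ limsup (fun t => diniQuot f x v t + (L * ‖u - v‖ : ℝ)) (𝓝[>] (0:ℝ)) :=
          limsup_le_limsup h1 ((hfin u).2.isCoboundedUnder_le) hbd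
      _ = upperDini f x v + L * ‖u - v‖ := h2
  have hlowM : ∀ u : E, LowerDiniMFinite f x u := by
    intro u
    refine ⟨-(L * ‖u‖), ?_⟩
    rintro y ⟨w, rfl⟩
    have h := hlow w (u + w)
    have hn : ‖w - (u + w)‖ = ‖u‖ := by
      have : w - (u + w) = -u := by abel
      rw [this, norm_neg]
    rw [hn] at h
    show -(↑L * ‖u‖) ≤ lowerDini f x (u + w) - lowerDini f x w
    linarith
  have huppM : ∀ u : E, UpperDiniMFinite f x u := by
    intro u
    refine ⟨L * ‖u‖, ?_⟩
    rintro y ⟨w, rfl⟩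
    have h := hupp (u + w) w
    have hn : ‖u + w - w‖ = ‖u‖ := by
      have : u + w - w = u := by abel
      rw [this]
    rw [hn] at h
    show upperDini f x (u + w) - upperDini f x w ≤ ↑L * ‖u‖
    linarith
  have hMlow : ∀ u v : E, lowerDiniM f x u ≤ lowerDiniM f x v + L * ‖u - v‖ := by
    intro u v
    rw [← sub_le_iff_le_add]
    show lowerDiniM f x u - ↑L * ‖u - v‖ ≤ ⨅ w : E, (lowerDini f x (v + w) - lowerDini f x w)
    apply le_ciInf
    intro w
    have h1 : lowerDiniM f x u ≤ lowerDini f x (u + w) - lowerDini f x w :=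
      ciInf_le (hlowM u) w
    have h2 := hlow (u + w) (v + w)
    have hn : ‖u + w - (v + w)‖ = ‖u - v‖ := by
      have : u + w - (v + w) = u - v := by abel
      rw [this]
    rw [hn] at h2
    linarith
  have hMupp : ∀ u v : E, upperDiniM f x u ≤ upperDiniM f x v + L * ‖u - v‖ := by
    intro u v
    show (⨆ w : E, (upperDini f x (u + w) - upperDini f x w)) ≤ upperDiniM f x v + ↑L * ‖u - v‖
    apply ciSup_le
    intro w
    have h1 : upperDini f x (v + w) - upperDini f x w ≤ upperDiniM f x v :=
      le_ciSup (huppM v) w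
    have h2 := hupp (u + w) (v + w)
    have hn : ‖u + w - (v + w)‖ = ‖u - v‖ := by
      have : u + w - (v + w) = u - v := by abel
      rw [this]
    rw [hn] at h2
    linarith
  refine ⟨hfin, hlowM, huppM, ?_, ?_⟩
  · apply LipschitzWith.of_dist_le_mul
    intro u v
    rw [Real.dist_eq, dist_eq_norm]
    have h1 := hMlow u v
    have h2 := hMlow v u
    rw [norm_sub_rev] at h2
    rw [abs_le]
    constructor <;> linarith
  · apply LipschitzWith.of_dist_le_mul
    intro u v
    rw [Real.dist_eq, dist_eq_norm]
    have h1 := hMupp u v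
    have h2 := hMupp v u
    rw [norm_sub_rev] at h2
    rw [abs_le]
    constructor <;> linarith
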